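/- Let α ∈ (0,1), λ₁,…,λ_k > 0, λ = ∑_{j=1}^{k} λ_j, and n ≥ 1 an integer. Then (α/Γ(1-α))·∫_0^∞ ( ∑_{x ∈ Ω(k,n)} ∏_{j=1}^{k} ((λ_j s)^{x_j}/x_j!)·e^{-λ_j s} )·s^{-α-1} ds = (α·λ^α/Γ(1-α))·∑_{x ∈ Ω(k,n)} Γ(∑_{j=1}^{k} x_j - α)·∏_{j=1}^{k} ((λ_j/λ)^{x_j}/x_j!), where Ω(k,n) = {x ∈ ℕ^k : ∑_j j x_j = n}. -/

import Mathlib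

open scoped BigOperators
open MeasureTheory

/-- State probabilities of the generalized counting process. -/
noncomputable def gcpPMF (k : ℕ) (lam : Fin k → ℝ) (t : ℝ) (n : ℕ) : ℝ :=
  ∑' x : Fin k → ℕ,
    if (∑ j, (j.1 + 1) * x j) = n then
      ∏ j, (lam j * t) ^ (x j) / (Nat.factorial (x j) : ℝ) * Real.exp (-(lam j * t))
    else 0

/-- Lévy measure of the generalized space fractional counting process at level `n ≥ 1`:
`(α/Γ(1-α))·∫_0^∞ p(n,s)·s^{-α-1} ds
  = (α·λ^α/Γ(1-α))·∑_{x ∈ Ω(k,n)} Γ(∑_j x_j - α)·∏_j (λ_j/λ)^{x_j}/x_j!`. -/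
theorem gsfcp_levy_measure (α : ℝ) (hα0 : 0 < α) (hα1 : α < 1)
    (k : ℕ) (lam : Fin k → ℝ) (hlam : ∀ j, 0 < lam j) (n : ℕ) (hn : 1 ≤ n) :
    (α / Real.Gamma (1 - α)) *
        ∫ s in Set.Ioi (0 : ℝ), gcpPMF k lam s n * s ^ (-α - 1) =
      α * (∑ j, lam j) ^ α / Real.Gamma (1 - α) *
        ∑' x : Fin k → ℕ,
          (if (∑ j, (j.1 + 1) * x j) = n then
            Real.Gamma ((∑ j, (x j : ℝ)) - α) *
              ∏ j, (lam j / ∑ i, lam i) ^ (x j) / (Nat.factorial (x j) : ℝ)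
          else 0) := by
  classical
  rcases Nat.eq_zero_or_pos k with hk | hk
  · subst hk
    have h0 : ∀ x : Fin 0 → ℕ, ¬ ((∑ j, (j.1 + 1) * x j) = n) := by
      intro x
      simp only [Finset.univ_eq_empty, Finset.sum_empty]
      omega
    have h1 : ∀ s : ℝ, gcpPMF 0 lam s n = 0 := by
      intro s
      unfold gcpPMF
      simp only [if_neg (h0 _)]
      exact tsum_zero
    simp only [h1, zero_mul, integral_zero, mul_zero, if_neg (h0 _)]
    simp
  · have huniv : (Finset.univ : Finset (Fin k)).Nonempty := ⟨⟨0, hk⟩, Finset.mem_univ _⟩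
    set L : ℝ := ∑ j, lam j with hL
    have hLpos : 0 < L := Finset.sum_pos (fun j _ => hlam j) huniv
    set S : Finset (Fin k → ℕ) := Fintype.piFinset fun _ => Finset.range (n + 1) with hS
    -- outside S the condition fails
    have hout : ∀ x : Fin k → ℕ, x ∉ S → ¬ ((∑ j, (j.1 + 1) * x j) = n) := by
      intro x hx
      rw [hS, Fintype.mem_piFinset] at hx
      push_neg at hx
      obtain ⟨j, hj⟩ := hx
      rw [Finset.mem_range] at hj
      push_neg at hj
      have h1 : x j ≤ (j.1 + 1) * x j := Nat.le_mul_of_pos_left _ (Nat.succ_pos _)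
      have h2 : (j.1 + 1) * x j ≤ ∑ i, (i.1 + 1) * x i :=
        Finset.single_le_sum (f := fun i => (i.1 + 1) * x i) (fun i _ => Nat.zero_le _)
          (Finset.mem_univ j)
      omega
    -- if the condition holds then `∑ x j ≥ 1`
    have hcond : ∀ x : Fin k → ℕ, (∑ j, (j.1 + 1) * x j) = n → 1 ≤ ∑ j, x j := by
      intro x hx
      by_contra h
      push_neg at h
      interval_cases h' : (∑ j, x j)
      · have hz : ∀ j ∈ Finset.univ, x j = 0 := by
          intro j hj
          exact (Finset.sum_eq_zero_iff).1 h' j hj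
        have : (∑ j, (j.1 + 1) * x j) = 0 :=
          Finset.sum_eq_zero fun j hj => by rw [hz j hj, mul_zero]
        omega
    -- product rewriting
    have hterm : ∀ (x : Fin k → ℕ) (s : ℝ),
        (∏ j, (lam j * s) ^ (x j) / (Nat.factorial (x j) : ℝ) * Real.exp (-(lam j * s)))
          = (∏ j, lam j ^ (x j) / (Nat.factorial (x j) : ℝ)) * s ^ (∑ j, x j) *
              Real.exp (-(L * s)) := by
      intro x s
      calc (∏ j, (lam j * s) ^ (x j) / (Nat.factorial (x j) : ℝ) * Real.exp (-(lam j * s)))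
          = ∏ j, (lam j ^ (x j) / (Nat.factorial (x j) : ℝ)) * s ^ (x j) *
              Real.exp (-(lam j * s)) := by
            refine Finset.prod_congr rfl fun j _ => ?_
            rw [mul_pow]; ring
        _ = (∏ j, lam j ^ (x j) / (Nat.factorial (x j) : ℝ)) * s ^ (∑ j, x j) *
              Real.exp (-(L * s)) := by
            rw [Finset.prod_mul_distrib, Finset.prod_mul_distrib,
              Finset.prod_pow_eq_pow_sum, ← Real.exp_sum]
            congr 2
            rw [hL, Finset.sum_mul]
            simp [Finset.sum_neg_distrib]
    -- rewrite the pmf as a finite sum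
    have hpmf : ∀ s : ℝ, gcpPMF k lam s n =
        ∑ x ∈ S, (if (∑ j, (j.1 + 1) * x j) = n then
          (∏ j, lam j ^ (x j) / (Nat.factorial (x j) : ℝ)) * s ^ (∑ j, x j) *
            Real.exp (-(L * s)) else 0) := by
      intro s
      unfold gcpPMF
      rw [tsum_eq_sum (s := S) (fun x hx => if_neg (hout x hx))]
      refine Finset.sum_congr rfl fun x _ => ?_
      by_cases hc : (∑ j, (j.1 + 1) * x j) = n
      · rw [if_pos hc, if_pos hc, hterm]
      · rw [if_neg hc, if_neg hc]
    -- integrability of each summand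
    have hint : ∀ x : Fin k → ℕ,
        IntegrableOn (fun s : ℝ => (if (∑ j, (j.1 + 1) * x j) = n then
          (∏ j, lam j ^ (x j) / (Nat.factorial (x j) : ℝ)) * s ^ (∑ j, x j) *
            Real.exp (-(L * s)) else 0) * s ^ (-α - 1)) (Set.Ioi 0) := by
      intro x
      by_cases hc : (∑ j, (j.1 + 1) * x j) = n
      · simp only [if_pos hc]
        have hm : 1 ≤ ∑ j, x j := hcond x hc
        have hm' : (1 : ℝ) ≤ (∑ j, x j : ℕ) := by exact_mod_cast hm
        have base : IntegrableOn
            (fun s : ℝ => s ^ (((∑ j, x j : ℕ) : ℝ) - α - 1) * Real.exp (-(L * s)))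
            (Set.Ioi 0) := by
          have := integrableOn_rpow_mul_exp_neg_mul_rpow
            (p := 1) (s := ((∑ j, x j : ℕ) : ℝ) - α - 1) (b := L) (by linarith) one_pos hLpos
          simpa [Real.rpow_one, neg_mul] using this
        refine MeasureTheory.IntegrableOn.congr_fun
          (base.const_mul ((∏ j, lam j ^ (x j) / (Nat.factorial (x j) : ℝ))))
          ?_ measurableSet_Ioi
        intro s hs
        have hs0 : (0 : ℝ) < s := hs
        have hpow : s ^ (∑ j, x j) * s ^ (-α - 1)
            = s ^ (((∑ j, x j : ℕ) : ℝ) - α - 1) := by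
          rw [← Real.rpow_natCast s (∑ j, x j), ← Real.rpow_add hs0]
          congr 1
          ring
        dsimp only
        rw [← hpow]
        ring
      · simp only [if_neg hc, zero_mul]
        exact integrableOn_zero
    -- value of each summand
    have hval : ∀ x : Fin k → ℕ,
        (∫ s in Set.Ioi (0 : ℝ), (if (∑ j, (j.1 + 1) * x j) = n then
          (∏ j, lam j ^ (x j) / (Nat.factorial (x j) : ℝ)) * s ^ (∑ j, x j) *
            Real.exp (-(L * s)) else 0) * s ^ (-α - 1))
        = (if (∑ j, (j.1 + 1) * x j) = n then
            (∏ j, lam j ^ (x j) / (Nat.factorial (x j) : ℝ)) *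
              ((1 / L) ^ (((∑ j, x j : ℕ) : ℝ) - α) *
                Real.Gamma (((∑ j, x j : ℕ) : ℝ) - α)) else 0) := by
      intro x
      by_cases hc : (∑ j, (j.1 + 1) * x j) = n
      · simp only [if_pos hc]
        have hm : 1 ≤ ∑ j, x j := hcond x hc
        have hm' : (1 : ℝ) ≤ (∑ j, x j : ℕ) := by exact_mod_cast hm
        have ha : 0 < ((∑ j, x j : ℕ) : ℝ) - α := by linarith
        rw [show (∫ s in Set.Ioi (0 : ℝ),
            ((∏ j, lam j ^ (x j) / (Nat.factorial (x j) : ℝ)) * s ^ (∑ j, x j) *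
              Real.exp (-(L * s))) * s ^ (-α - 1))
          = ∫ s in Set.Ioi (0 : ℝ),
            (∏ j, lam j ^ (x j) / (Nat.factorial (x j) : ℝ)) *
              (s ^ ((((∑ j, x j : ℕ) : ℝ) - α) - 1) * Real.exp (-(L * s))) from ?_]
        · rw [MeasureTheory.integral_const_mul,
            Real.integral_rpow_mul_exp_neg_mul_Ioi ha hLpos]
        · refine setIntegral_congr_fun measurableSet_Ioi fun s hs => ?_
          have hs0 : (0 : ℝ) < s := hs
          have hpow : s ^ (∑ j, x j) * s ^ (-α - 1)
              = s ^ ((((∑ j, x j : ℕ) : ℝ) - α) - 1) := by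
            rw [← Real.rpow_natCast s (∑ j, x j), ← Real.rpow_add hs0]
            congr 1
            ring
          rw [← hpow]
          ring
      · simp only [if_neg hc, zero_mul, integral_zero]
    -- pointwise identity between the two summands
    have hpt : ∀ x : Fin k → ℕ,
        (if (∑ j, (j.1 + 1) * x j) = n then
          (∏ j, lam j ^ (x j) / (Nat.factorial (x j) : ℝ)) *
            ((1 / L) ^ (((∑ j, x j : ℕ) : ℝ) - α) *
              Real.Gamma (((∑ j, x j : ℕ) : ℝ) - α)) else 0)
        = L ^ α * (if (∑ j, (j.1 + 1) * x j) = n then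
            Real.Gamma ((∑ j, (x j : ℝ)) - α) *
              ∏ j, (lam j / L) ^ (x j) / (Nat.factorial (x j) : ℝ) else 0) := by
      intro x
      by_cases hc : (∑ j, (j.1 + 1) * x j) = n
      · rw [if_pos hc, if_pos hc]
        have hmR : (∑ j, (x j : ℝ)) = ((∑ j, x j : ℕ) : ℝ) := by push_cast; rfl
        have hLm : (0 : ℝ) < L ^ (∑ j, x j) := pow_pos hLpos _
        have hprod : (∏ j, (lam j / L) ^ (x j) / (Nat.factorial (x j) : ℝ))
            = (∏ j, lam j ^ (x j) / (Nat.factorial (x j) : ℝ)) / L ^ (∑ j, x j) := by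
          rw [eq_div_iff hLm.ne', ← Finset.prod_pow_eq_pow_sum, ← Finset.prod_mul_distrib]
          refine Finset.prod_congr rfl fun j _ => ?_
          rw [div_pow]
          field_simp
        have hrp : (1 / L : ℝ) ^ (((∑ j, x j : ℕ) : ℝ) - α)
            = L ^ α / L ^ (∑ j, x j) := by
          rw [Real.div_rpow zero_le_one hLpos.le, Real.one_rpow,
            Real.rpow_sub hLpos, Real.rpow_natCast, one_div_div]
        rw [hmR, hprod, hrp]
        ring
      · rw [if_neg hc, if_neg hc, mul_zero]
    -- main computation
    have key : (∫ s in Set.Ioi (0 : ℝ), gcpPMF k lam s n * s ^ (-α - 1))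
        = ∑ x ∈ S, ∫ s in Set.Ioi (0 : ℝ), (if (∑ j, (j.1 + 1) * x j) = n then
            (∏ j, lam j ^ (x j) / (Nat.factorial (x j) : ℝ)) * s ^ (∑ j, x j) *
              Real.exp (-(L * s)) else 0) * s ^ (-α - 1) := by
      rw [← MeasureTheory.integral_finset_sum S (fun x _ => hint x)]
      refine setIntegral_congr_fun measurableSet_Ioi fun s hs => ?_
      rw [hpmf s, Finset.sum_mul]
    rw [tsum_eq_sum (s := S) (fun x hx => if_neg (hout x hx)), key,
      Finset.sum_congr rfl (fun x _ => hval x),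
      Finset.sum_congr rfl (fun x _ => hpt x), ← Finset.mul_sum]
    ring
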